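/- arXiv:math-ph/0406041 — 3 statements merged into one kernel-verified Lean document; each statement's English description precedes it below -/
import Mathlib

section
/- Let d > 0, D > 0, g₀ > 0, C > 0. Suppose G : Δ × (0,d] → ℝ is C² in E with |G(E,δ) − g₀δ²(E−E₀)²/2| ≤ Cδ³, |∂_E G(E,δ) − g₀δ²(E−E₀)| ≤ Cδ³ and |∂²_E G(E,δ) − g₀δ²| ≤ Cδ³ for all E ∈ Δ, and let r : Δ × (0,d] → ℝ be C² in E with |∂ⁿ_E r(E,δ)| ≤ Cδ³ for n = 0,1,2. Define α(E,δ) := G(E,δ) + Dδ²/k_c(E) + r(E,δ). Then: (i) the equation (E − E₀)·g₀·k_c(E)³ = D has at most one solution in Δ, and if (E₂ − E₀)·g₀·k_c(E₂)³ > D it has a unique solution E₁ ∈ (E₀,E₂); (ii) assuming E₁ exists in the interior of Δ, there exist δ₀ ∈ (0,d] and C′ > 0 such that for all δ ∈ (0,δ₀] the global minimizer E*(δ) of α(·,δ) on Δ satisfies |E*(δ) − E₁| ≤ C′δ, |α(E*(δ),δ) − δ²(D/k_c(E₁) + g₀(E₁−E₀)²/2)| ≤ C′δ³, and |∂²_E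 α(E*(δ),δ) − δ²(g₀ + 3D/k_c(E₁)⁵)| ≤ C′δ³. -/
set_option maxHeartbeats 4000000

private lemma tangent_aux {a b : ℝ} (ha : 0 < a) (hb : 0 < b) :
    0 ≤ 1/a - 1/b + (a^2 - b^2)/(2*b^3) := by
  have h : 1/a - 1/b + (a^2 - b^2)/(2*b^3) = (a-b)^2*(a+2*b)/(2*a*b^3) := by
    field_simp; ring
  rw [h]; positivity

private lemma lipinv_aux {s x y : ℝ} (hs : 0 < s) (hx : s ≤ x) (hy : s ≤ y) :
    |1/x - 1/y| ≤ |x^2 - y^2|/(2*s^3) := by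
  have hx0 : 0 < x := lt_of_lt_of_le hs hx
  have hy0 : 0 < y := lt_of_lt_of_le hs hy
  have h : 1/x - 1/y = (y^2 - x^2)/(x*y*(x+y)) := by field_simp; ring
  rw [h, abs_div, abs_of_pos (by positivity : (0:ℝ) < x*y*(x+y)), abs_sub_comm (y^2)]
  rw [div_le_div_iff₀ (by positivity) (by positivity)]
  have q1 : s*s ≤ x*y := mul_le_mul hx hy hs.le hx0.le
  have q2 : (s*s)*(2*s) ≤ (x*y)*(x+y) := mul_le_mul q1 (by linarith) (by positivity) (by positivity)
  have h2 : 2*s^3 ≤ x*y*(x+y) := by nlinarith [q2]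
  exact mul_le_mul_of_nonneg_left h2 (abs_nonneg _)

private lemma lipinv5_aux {s K x y : ℝ} (hs : 0 < s) (hx : s ≤ x) (hy : s ≤ y)
    (hxK : x ≤ K) (hyK : y ≤ K) :
    |1/x^5 - 1/y^5| ≤ 5*K^4*|x^2 - y^2|/(2*s^11) := by
  have hx0 : 0 < x := hs.trans_le hx
  have hy0 : 0 < y := hs.trans_le hy
  have hK0 : 0 < K := hx0.trans_le hxK
  have h : 1/x^5 - 1/y^5 = (y^2 - x^2)*(y^4+y^3*x+y^2*x^2+y*x^3+x^4)/((x+y)*x^5*y^5) := by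
    field_simp; ring
  have hP : (0:ℝ) < y^4+y^3*x+y^2*x^2+y*x^3+x^4 := by positivity
  rw [h, abs_div, abs_mul, abs_of_pos hP, abs_of_pos (by positivity : (0:ℝ) < (x+y)*x^5*y^5),
    abs_sub_comm (y^2)]
  rw [div_le_div_iff₀ (by positivity) (by positivity)]
  have e1 : y^4 ≤ K^4 := pow_le_pow_left₀ hy0.le hyK 4
  have e2 : x^4 ≤ K^4 := pow_le_pow_left₀ hx0.le hxK 4
  have e3 : y^3*x ≤ K^4 := by
    nlinarith [mul_nonneg (sub_nonneg.mpr (pow_le_pow_left₀ hy0.le hyK 3)) hx0.le,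
      mul_nonneg (pow_nonneg hK0.le 3) (sub_nonneg.mpr hxK)]
  have e4 : y^2*x^2 ≤ K^4 := by
    nlinarith [mul_nonneg (sub_nonneg.mpr (pow_le_pow_left₀ hy0.le hyK 2)) (pow_nonneg hx0.le 2),
      mul_nonneg (pow_nonneg hK0.le 2) (sub_nonneg.mpr (pow_le_pow_left₀ hx0.le hxK 2))]
  have e5 : y*x^3 ≤ K^4 := by
    nlinarith [mul_nonneg (sub_nonneg.mpr (pow_le_pow_left₀ hx0.le hxK 3)) hy0.le,
      mul_nonneg (pow_nonneg hK0.le 3) (sub_nonneg.mpr hyK)]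
  have h1 : y^4+y^3*x+y^2*x^2+y*x^3+x^4 ≤ 5*K^4 := by linarith
  have px : s^5 ≤ x^5 := pow_le_pow_left₀ hs.le hx 5
  have py : s^5 ≤ y^5 := pow_le_pow_left₀ hs.le hy 5
  have q1 : s^5*s^5 ≤ x^5*y^5 :=
    mul_le_mul px py (pow_nonneg hs.le 5) (pow_nonneg hx0.le 5)
  have q2 : (2*s)*(s^5*s^5) ≤ (x+y)*(x^5*y^5) :=
    mul_le_mul (by linarith) q1 (by positivity) (by positivity)
  have h2 : 2*s^11 ≤ (x+y)*x^5*y^5 := by nlinarith [q2]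
  have h3 : (y^4+y^3*x+y^2*x^2+y*x^3+x^4)*(2*s^11) ≤ (5*K^4)*((x+y)*x^5*y^5) :=
    mul_le_mul h1 h2 (by positivity) (by positivity)
  calc |x^2-y^2| * (y^4+y^3*x+y^2*x^2+y*x^3+x^4) * (2*s^11)
      = |x^2-y^2| * ((y^4+y^3*x+y^2*x^2+y*x^3+x^4)*(2*s^11)) := by ring
    _ ≤ |x^2-y^2| * ((5*K^4)*((x+y)*x^5*y^5)) := mul_le_mul_of_nonneg_left h3 (abs_nonneg _)
    _ = 5*K^4*|x^2-y^2| * ((x+y)*x^5*y^5) := by ring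

private lemma iter2_aux {a b x : ℝ} (f : ℝ → ℝ) (hx : x ∈ Set.Ioo a b) :
    iteratedDerivWithin 2 f (Set.Icc a b) x = deriv (deriv f) x := by
  have hab : a < b := lt_trans hx.1 hx.2
  have hu := uniqueDiffOn_Icc hab
  have h1 : (iteratedDerivWithin 1 f (Set.Icc a b)) =ᶠ[nhds x] deriv f := by
    filter_upwards [Ioo_mem_nhds hx.1 hx.2] with y hy
    rw [iteratedDerivWithin_one,
      derivWithin_of_mem_nhds (Icc_mem_nhds hy.1 hy.2)]
  rw [show (2:ℕ) = 1 + 1 from rfl,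
    iteratedDerivWithin_succ,
    derivWithin_of_mem_nhds (Icc_mem_nhds hx.1 hx.2), h1.deriv_eq]

private lemma hasDerivAt_ksqrt {ec x : ℝ} (hx : ec < x) :
    HasDerivAt (fun E => Real.sqrt (2*(E - ec))) ((Real.sqrt (2*(x - ec)))⁻¹) x := by
  have h2 : (0:ℝ) < 2*(x - ec) := by linarith
  have hkpos : 0 < Real.sqrt (2*(x-ec)) := Real.sqrt_pos.mpr h2
  have inner : HasDerivAt (fun E : ℝ => 2*(E - ec)) 2 x := by
    simpa using ((hasDerivAt_id x).sub_const ec).const_mul 2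
  have := (Real.hasDerivAt_sqrt (ne_of_gt h2)).comp x inner
  refine this.congr_deriv ?_
  ring

private lemma hasDerivAt_invk {ec c x : ℝ} (hx : ec < x) :
    HasDerivAt (fun E => c / Real.sqrt (2*(E - ec))) (-c / (Real.sqrt (2*(x - ec)))^3) x := by
  have h2 : (0:ℝ) < 2*(x - ec) := by linarith
  have hkpos : 0 < Real.sqrt (2*(x-ec)) := Real.sqrt_pos.mpr h2
  have h := ((hasDerivAt_ksqrt hx).inv (ne_of_gt hkpos)).const_mul c
  have hfun : (fun E => c / Real.sqrt (2*(E-ec))) = fun E => c * (Real.sqrt (2*(E-ec)))⁻¹ := by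
    funext E; rw [div_eq_mul_inv]
  rw [hfun]
  refine h.congr_deriv ?_
  ring

private lemma hasDerivAt_invk3 {ec c x : ℝ} (hx : ec < x) :
    HasDerivAt (fun E => -c / (Real.sqrt (2*(E - ec)))^3) (3*c / (Real.sqrt (2*(x - ec)))^5) x := by
  have h2 : (0:ℝ) < 2*(x - ec) := by linarith
  have hkpos : 0 < Real.sqrt (2*(x-ec)) := Real.sqrt_pos.mpr h2
  have h := (((hasDerivAt_ksqrt hx).pow 3).inv (pow_ne_zero 3 hkpos.ne')).const_mul (-c)
  have hfun : (fun E => -c / (Real.sqrt (2*(E-ec)))^3)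
      = fun E => -c * ((Real.sqrt (2*(E-ec)))^3)⁻¹ := by
    funext E; rw [div_eq_mul_inv]
  rw [hfun]
  obtain ⟨k, hkdef⟩ : ∃ k, Real.sqrt (2*(x-ec)) = k := ⟨_, rfl⟩
  rw [hkdef] at hkpos h ⊢
  have hkne : k ≠ 0 := ne_of_gt hkpos
  refine h.congr_deriv ?_
  have h31 : (3:ℕ) - 1 = 2 := rfl
  rw [h31]
  simp only [Pi.pow_apply]
  rw [hkdef]
  push_cast
  field_simp

/-- Δ = [E₁′,E₂] with interior point E₀; `E − e_c ≥ m₀ > 0` on Δ; `k_c(E) := √(2(E−e_c))`.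
`G(·,δ)` is C² with `G ≈ g₀δ²(E−E₀)²/2`, `∂_E G ≈ g₀δ²(E−E₀)`, `∂²_E G ≈ g₀δ²` up to
`O(δ³)`; `r(·,δ)` is C² with `|∂ⁿ_E r| ≤ Cδ³` (n = 0,1,2);
`α(E,δ) := G(E,δ) + Dδ²/k_c(E) + r(E,δ)`.  Then:
(i) the equation `(E−E₀) g₀ k_c(E)³ = D` has at most one solution in Δ, and if
`(E₂−E₀) g₀ k_c(E₂)³ > D` it has a unique solution `E₁ ∈ (E₀,E₂)`;
(ii) if such a solution `E₁` lies in the interior of Δ, then there are `δ₀ ∈ (0,d]`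
and `C′ > 0` such that for all `δ ∈ (0,δ₀]` the global minimizer `E*(δ)` of `α(·,δ)`
on Δ satisfies `|E*(δ) − E₁| ≤ C′δ`,
`|α(E*(δ),δ) − δ²(D/k_c(E₁) + g₀(E₁−E₀)²/2)| ≤ C′δ³`, and
`|∂²_E α(E*(δ),δ) − δ²(g₀ + 3D/k_c(E₁)⁵)| ≤ C′δ³`. -/
theorem stmt_14 (E₁' E₂ E₀ : ℝ) (hE₀ : E₀ ∈ Set.Ioo E₁' E₂)
    (ec m₀ : ℝ) (hm₀ : 0 < m₀) (hgap : ∀ E ∈ Set.Icc E₁' E₂, m₀ ≤ E - ec)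
    (d D g₀ C : ℝ) (hd : 0 < d) (hD : 0 < D) (hg₀ : 0 < g₀) (hC : 0 < C)
    (G : ℝ → ℝ → ℝ)
    (hG : ∀ δ ∈ Set.Ioc (0 : ℝ) d,
      ContDiffOn ℝ 2 (fun E => G E δ) (Set.Icc E₁' E₂) ∧
      ∀ E ∈ Set.Icc E₁' E₂,
        |G E δ - g₀ * δ ^ 2 * (E - E₀) ^ 2 / 2| ≤ C * δ ^ 3 ∧
        |derivWithin (fun E' => G E' δ) (Set.Icc E₁' E₂) E - g₀ * δ ^ 2 * (E - E₀)|
          ≤ C * δ ^ 3 ∧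
        |iteratedDerivWithin 2 (fun E' => G E' δ) (Set.Icc E₁' E₂) E - g₀ * δ ^ 2|
          ≤ C * δ ^ 3)
    (r : ℝ → ℝ → ℝ)
    (hr : ∀ δ ∈ Set.Ioc (0 : ℝ) d,
      ContDiffOn ℝ 2 (fun E => r E δ) (Set.Icc E₁' E₂) ∧
      ∀ E ∈ Set.Icc E₁' E₂, ∀ n : ℕ, n ≤ 2 →
        |iteratedDerivWithin n (fun E' => r E' δ) (Set.Icc E₁' E₂) E| ≤ C * δ ^ 3) :
    ((∀ a ∈ Set.Icc E₁' E₂, ∀ b ∈ Set.Icc E₁' E₂,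
        (a - E₀) * g₀ * Real.sqrt (2 * (a - ec)) ^ 3 = D →
        (b - E₀) * g₀ * Real.sqrt (2 * (b - ec)) ^ 3 = D → a = b) ∧
      (D < (E₂ - E₀) * g₀ * Real.sqrt (2 * (E₂ - ec)) ^ 3 →
        ∃ Eone ∈ Set.Ioo E₀ E₂,
          (Eone - E₀) * g₀ * Real.sqrt (2 * (Eone - ec)) ^ 3 = D)) ∧
    (∀ Eone ∈ Set.Ioo E₁' E₂,
      (Eone - E₀) * g₀ * Real.sqrt (2 * (Eone - ec)) ^ 3 = D →
      ∃ δ₀ ∈ Set.Ioc (0 : ℝ) d, ∃ C' : ℝ, 0 < C' ∧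
        ∀ δ ∈ Set.Ioc (0 : ℝ) δ₀, ∀ Estar ∈ Set.Icc E₁' E₂,
          (∀ E ∈ Set.Icc E₁' E₂,
            G Estar δ + D * δ ^ 2 / Real.sqrt (2 * (Estar - ec)) + r Estar δ ≤
              G E δ + D * δ ^ 2 / Real.sqrt (2 * (E - ec)) + r E δ) →
          |Estar - Eone| ≤ C' * δ ∧
          |(G Estar δ + D * δ ^ 2 / Real.sqrt (2 * (Estar - ec)) + r Estar δ) -
              δ ^ 2 * (D / Real.sqrt (2 * (Eone - ec)) + g₀ * (Eone - E₀) ^ 2 / 2)|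
            ≤ C' * δ ^ 3 ∧
          |iteratedDerivWithin 2
              (fun E => G E δ + D * δ ^ 2 / Real.sqrt (2 * (E - ec)) + r E δ)
              (Set.Icc E₁' E₂) Estar -
              δ ^ 2 * (g₀ + 3 * D / Real.sqrt (2 * (Eone - ec)) ^ 5)| ≤ C' * δ ^ 3) := by
  constructor
  · have key : ∀ x ∈ Set.Icc E₁' E₂, ∀ y ∈ Set.Icc E₁' E₂, x < y →
        (x - E₀) * g₀ * Real.sqrt (2 * (x - ec)) ^ 3 = D →
        (y - E₀) * g₀ * Real.sqrt (2 * (y - ec)) ^ 3 = D → False := by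
      intro x hx y hy hxy he1 he2
      have hkx : 0 < Real.sqrt (2 * (x - ec)) :=
        Real.sqrt_pos.mpr (by have := hgap x hx; linarith)
      have hky : 0 < Real.sqrt (2 * (y - ec)) :=
        Real.sqrt_pos.mpr (by have := hgap y hy; linarith)
      have hmono : Real.sqrt (2 * (x - ec)) ≤ Real.sqrt (2 * (y - ec)) :=
        Real.sqrt_le_sqrt (by linarith)
      have hp : Real.sqrt (2 * (x - ec)) ^ 3 ≤ Real.sqrt (2 * (y - ec)) ^ 3 :=
        pow_le_pow_left₀ hkx.le hmono 3
      have hx0 : 0 < x - E₀ := by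
        by_contra hcon
        push_neg at hcon
        nlinarith [mul_nonneg (mul_nonneg (neg_nonneg.mpr hcon) hg₀.le) (pow_nonneg hkx.le 3)]
      nlinarith [pow_pos hky 3, mul_pos (mul_pos (sub_pos.mpr hxy) hg₀) (pow_pos hky 3),
        mul_nonneg (mul_nonneg hx0.le hg₀.le) (sub_nonneg.mpr hp)]
    constructor
    · intro a ha b hb hfa hfb
      rcases lt_trichotomy a b with h | h | h
      · exact absurd (key a ha b hb h hfa hfb) (by simp)
      · exact h
      · exact absurd (key b hb a ha h hfb hfa) (by simp)
    · intro hlt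
      have hE₀S : E₀ ∈ Set.Icc E₁' E₂ := Set.mem_Icc.mpr ⟨hE₀.1.le, hE₀.2.le⟩
      have hcont : ContinuousOn (fun E : ℝ => (E - E₀) * g₀ * Real.sqrt (2 * (E - ec)) ^ 3)
          (Set.Icc E₀ E₂) := by
        apply Continuous.continuousOn
        fun_prop
      have hsub := intermediate_value_Ioo hE₀.2.le hcont
      have hmem : D ∈ Set.Ioo ((fun E : ℝ => (E - E₀) * g₀ * Real.sqrt (2 * (E - ec)) ^ 3) E₀)
          ((fun E : ℝ => (E - E₀) * g₀ * Real.sqrt (2 * (E - ec)) ^ 3) E₂) := by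
        constructor
        · simpa using hD
        · simpa using hlt
      obtain ⟨Eone, hEone, hfEone⟩ := hsub hmem
      exact ⟨Eone, hEone, hfEone⟩
  · intro Eone hEone heq
    have hE12 : E₁' < E₂ := hEone.1.trans hEone.2
    have hEoneS : Eone ∈ Set.Icc E₁' E₂ := ⟨hEone.1.le, hEone.2.le⟩
    have hE₂S : E₂ ∈ Set.Icc E₁' E₂ := Set.right_mem_Icc.mpr hE12.le
    set s : ℝ := Real.sqrt (2*m₀) with hsdef
    have hs : 0 < s := Real.sqrt_pos.mpr (by linarith)
    set K : ℝ := Real.sqrt (2*(E₂ - ec)) with hKdef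
    have hK : 0 < K := Real.sqrt_pos.mpr (by have := hgap E₂ hE₂S; linarith)
    have hkpos : ∀ E ∈ Set.Icc E₁' E₂, 0 < Real.sqrt (2*(E - ec)) := fun E hE =>
      Real.sqrt_pos.mpr (by have := hgap E hE; linarith)
    have hks : ∀ E ∈ Set.Icc E₁' E₂, s ≤ Real.sqrt (2*(E - ec)) := fun E hE =>
      Real.sqrt_le_sqrt (by have := hgap E hE; linarith)
    have hkK : ∀ E ∈ Set.Icc E₁' E₂, Real.sqrt (2*(E - ec)) ≤ K := fun E hE =>
      Real.sqrt_le_sqrt (by have := hE.2; linarith)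
    have hk2 : ∀ E ∈ Set.Icc E₁' E₂, (Real.sqrt (2*(E - ec)))^2 = 2*(E - ec) := fun E hE =>
      Real.sq_sqrt (by have := hgap E hE; linarith)
    have hbpos : 0 < Real.sqrt (2*(Eone - ec)) := hkpos Eone hEoneS
    have hEq1 : g₀*(Eone - E₀) = D / (Real.sqrt (2*(Eone - ec)))^3 := by
      rw [eq_div_iff (by positivity)]
      linear_combination heq
    set C₁ : ℝ := 2*C/g₀ with hC₁def
    have hC₁ : 0 < C₁ := by rw [hC₁def]; positivity
    set L : ℝ := g₀*(E₂ - E₁') + D/s^3 with hLdef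
    have hL : 0 < L := by rw [hLdef]; have : 0 < E₂ - E₁' := by linarith
                          positivity
    set C₃ : ℝ := 15*D*K^4/s^11*C₁ with hC₃def
    have hC₃ : 0 < C₃ := by rw [hC₃def]; positivity
    set C' : ℝ := C₁ + (2*C + L*C₁) + (2*C + C₃) + 1 with hC'def
    have hC' : 0 < C' := by rw [hC'def]; positivity
    set ρ : ℝ := min (Eone - E₁') (E₂ - Eone) with hρdef
    have hρ : 0 < ρ := lt_min (by linarith [hEone.1]) (by linarith [hEone.2])
    set δ₀ : ℝ := min d (g₀*ρ^2/(16*C)) with hδ₀def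
    have hδ₀pos : 0 < δ₀ := lt_min hd (by positivity)
    have hδ₀d : δ₀ ≤ d := min_le_left _ _
    refine ⟨δ₀, ⟨hδ₀pos, hδ₀d⟩, C', hC', ?_⟩
    intro δ hδ Estar hEstarS hmin
    have hδpos : 0 < δ := hδ.1
    have hδd : δ ≤ d := hδ.2.trans hδ₀d
    obtain ⟨hGc, hGb⟩ := hG δ ⟨hδpos, hδd⟩
    obtain ⟨hrc, hrb⟩ := hr δ ⟨hδpos, hδd⟩
    have hapos : 0 < Real.sqrt (2*(Estar - ec)) := hkpos Estar hEstarS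
    have ha2 : (Real.sqrt (2*(Estar - ec)))^2 = 2*(Estar - ec) := hk2 Estar hEstarS
    have hb2 : (Real.sqrt (2*(Eone - ec)))^2 = 2*(Eone - ec) := hk2 Eone hEoneS
    have hr0 : ∀ E ∈ Set.Icc E₁' E₂, |r E δ| ≤ C*δ^3 := by
      intro E hE
      have := hrb E hE 0 (by norm_num)
      simpa using this
    -- F1 : α ≈ δ² φ
    have habs : ∀ E ∈ Set.Icc E₁' E₂,
        |(G E δ + D*δ^2/Real.sqrt (2*(E - ec)) + r E δ)
          - δ^2*(g₀*(E - E₀)^2/2 + D/Real.sqrt (2*(E - ec)))| ≤ 2*C*δ^3 := by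
      intro E hE
      have h1 := (hGb E hE).1
      have h2 := hr0 E hE
      have hsplit : (G E δ + D*δ^2/Real.sqrt (2*(E - ec)) + r E δ)
          - δ^2*(g₀*(E - E₀)^2/2 + D/Real.sqrt (2*(E - ec)))
          = (G E δ - g₀*δ^2*(E - E₀)^2/2) + r E δ := by ring
      rw [hsplit]
      exact le_trans (abs_add_le _ _) (by linarith)
    -- F2 : quadratic growth at Estar
    have hquad : g₀/2*(Estar - Eone)^2 ≤
        (g₀*(Estar - E₀)^2/2 + D/Real.sqrt (2*(Estar - ec)))
        - (g₀*(Eone - E₀)^2/2 + D/Real.sqrt (2*(Eone - ec))) := by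
      have htan := tangent_aux hapos hbpos
      have hdiff : (Real.sqrt (2*(Estar - ec)))^2 - (Real.sqrt (2*(Eone - ec)))^2
          = 2*(Estar - Eone) := by rw [ha2, hb2]; ring
      rw [hdiff] at htan
      have hid : 2*(Estar - Eone)/(2*(Real.sqrt (2*(Eone - ec)))^3)
          = (Estar - Eone)/(Real.sqrt (2*(Eone - ec)))^3 :=
        mul_div_mul_left _ _ two_ne_zero
      have htan' : 0 ≤ 1/Real.sqrt (2*(Estar - ec)) - 1/Real.sqrt (2*(Eone - ec))
          + (Estar - Eone)/(Real.sqrt (2*(Eone - ec)))^3 := by linarith [htan, hid]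
      have hone : D*(1/Real.sqrt (2*(Estar - ec)) - 1/Real.sqrt (2*(Eone - ec))
            + (Estar - Eone)/(Real.sqrt (2*(Eone - ec)))^3)
          = D/Real.sqrt (2*(Estar - ec)) - D/Real.sqrt (2*(Eone - ec))
            + (Estar - Eone)*(D/(Real.sqrt (2*(Eone - ec)))^3) := by ring
      have ht2 : 0 ≤ D/Real.sqrt (2*(Estar - ec)) - D/Real.sqrt (2*(Eone - ec))
          + (Estar - Eone)*(D/(Real.sqrt (2*(Eone - ec)))^3) := by
        linarith [mul_nonneg hD.le htan', hone]
      have hexpand : g₀*(Estar - E₀)^2/2 - g₀*(Eone - E₀)^2/2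
          = g₀/2*(Estar - Eone)^2 + (Estar - Eone)*(g₀*(Eone - E₀)) := by ring
      have hEq1' : (Estar - Eone)*(g₀*(Eone - E₀))
          = (Estar - Eone)*(D/(Real.sqrt (2*(Eone - ec)))^3) := by rw [hEq1]
      linarith
    -- crude bound on the minimizer location
    have hmin1 := hmin Eone hEoneS
    have hA := habs Estar hEstarS
    have hB := habs Eone hEoneS
    have hphi_le : (g₀*(Estar - E₀)^2/2 + D/Real.sqrt (2*(Estar - ec)))
        - (g₀*(Eone - E₀)^2/2 + D/Real.sqrt (2*(Eone - ec))) ≤ 4*C*δ := by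
      have hA' := abs_le.mp hA
      have hB' := abs_le.mp hB
      have h2 : δ^2*((g₀*(Estar - E₀)^2/2 + D/Real.sqrt (2*(Estar - ec)))
          - (g₀*(Eone - E₀)^2/2 + D/Real.sqrt (2*(Eone - ec)))) ≤ δ^2*(4*C*δ) := by
        linarith [hmin1, hA'.1, hA'.2, hB'.1, hB'.2]
      exact le_of_mul_le_mul_left h2 (pow_pos hδpos 2)
    have hcrude : (Estar - Eone)^2 < ρ^2 := by
      have hδsmall : δ ≤ g₀*ρ^2/(16*C) := le_trans hδ.2 (min_le_right _ _)
      have h4 : 4*C*δ ≤ g₀*ρ^2/4 := by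
        have h5 := mul_le_mul_of_nonneg_left hδsmall (by positivity : (0:ℝ) ≤ 4*C)
        calc 4*C*δ ≤ 4*C*(g₀*ρ^2/(16*C)) := h5
          _ = g₀*ρ^2/4 := by field_simp; ring
      nlinarith [hquad, hphi_le, mul_pos hg₀ (mul_pos hρ hρ)]
    have hEstarIoo : Estar ∈ Set.Ioo E₁' E₂ := by
      constructor
      · by_contra hcon
        push_neg at hcon
        have hρ1 : ρ ≤ Eone - E₁' := min_le_left _ _
        nlinarith [hcrude]
      · by_contra hcon
        push_neg at hcon
        have hρ2 : ρ ≤ E₂ - Eone := min_le_right _ _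
        nlinarith [hcrude]
    -- interior calculus setup
    have hSmem : Set.Icc E₁' E₂ ∈ nhds Estar := Icc_mem_nhds hEstarIoo.1 hEstarIoo.2
    have hU : Set.Ioo E₁' E₂ ∈ nhds Estar := Ioo_mem_nhds hEstarIoo.1 hEstarIoo.2
    have hecE : ∀ y ∈ Set.Icc E₁' E₂, ec < y := fun y hy => by have := hgap y hy; linarith
    have hGat : ContDiffAt ℝ 2 (fun E => G E δ) Estar := hGc.contDiffAt hSmem
    have hrat : ContDiffAt ℝ 2 (fun E => r E δ) Estar := hrc.contDiffAt hSmem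
    -- local min ⇒ derivative of α vanishes at Estar
    have hloc : IsLocalMin (fun E => G E δ + D*δ^2/Real.sqrt (2*(E - ec)) + r E δ) Estar :=
      Filter.eventually_of_mem hSmem fun E hE => hmin E hE
    have hd0 : deriv (fun E => G E δ + D*δ^2/Real.sqrt (2*(E - ec)) + r E δ) Estar = 0 :=
      hloc.deriv_eq_zero
    have hhas : HasDerivAt (fun E => D*δ^2/Real.sqrt (2*(E - ec)))
        (-(D*δ^2)/(Real.sqrt (2*(Estar - ec)))^3) Estar :=
      hasDerivAt_invk (hecE Estar hEstarS)
    have hsum : HasDerivAt (fun E => G E δ + D*δ^2/Real.sqrt (2*(E - ec)) + r E δ)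
        (deriv (fun E => G E δ) Estar + -(D*δ^2)/(Real.sqrt (2*(Estar - ec)))^3
          + deriv (fun E => r E δ) Estar) Estar :=
      (((hGat.differentiableAt two_ne_zero).hasDerivAt.add hhas).add
        (hrat.differentiableAt two_ne_zero).hasDerivAt)
    have hzero : deriv (fun E => G E δ) Estar + -(D*δ^2)/(Real.sqrt (2*(Estar - ec)))^3
        + deriv (fun E => r E δ) Estar = 0 := hsum.deriv.symm.trans hd0
    have hG1 := (hGb Estar hEstarS).2.1
    rw [derivWithin_of_mem_nhds hSmem] at hG1
    have hr1 : |deriv (fun E => r E δ) Estar| ≤ C*δ^3 := by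
      have h := hrb Estar hEstarS 1 (by norm_num)
      rwa [iteratedDerivWithin_one,
        derivWithin_of_mem_nhds hSmem] at h
    have hphi' : |g₀*(Estar - E₀) - D/(Real.sqrt (2*(Estar - ec)))^3| ≤ 2*C*δ := by
      have hkey : g₀*δ^2*(Estar - E₀) - D*δ^2/(Real.sqrt (2*(Estar - ec)))^3
          = (g₀*δ^2*(Estar - E₀) - deriv (fun E => G E δ) Estar)
            + (- deriv (fun E => r E δ) Estar) := by linear_combination hzero
      have habs2 : |g₀*δ^2*(Estar - E₀) - D*δ^2/(Real.sqrt (2*(Estar - ec)))^3| ≤ 2*C*δ^3 := by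
        rw [hkey]
        refine (abs_add_le _ _).trans ?_
        rw [abs_neg, abs_sub_comm]
        linarith [hG1, hr1]
      have hform : g₀*δ^2*(Estar - E₀) - D*δ^2/(Real.sqrt (2*(Estar - ec)))^3
          = δ^2*(g₀*(Estar - E₀) - D/(Real.sqrt (2*(Estar - ec)))^3) := by ring
      rw [hform, abs_mul, abs_of_pos (pow_pos hδpos 2)] at habs2
      exact le_of_mul_le_mul_left (by linarith [habs2]) (pow_pos hδpos 2)
    -- |Estar − Eone| ≤ C₁ δ
    have hg2 : g₀*|Estar - Eone| ≤ 2*C*δ := by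
      have hb3 : 0 < (Real.sqrt (2*(Eone - ec)))^3 := pow_pos hbpos 3
      have ha3 : 0 < (Real.sqrt (2*(Estar - ec)))^3 := pow_pos hapos 3
      have hphiab := abs_le.mp hphi'
      rcases le_total Eone Estar with hle | hle
      · have hκ : Real.sqrt (2*(Eone - ec)) ≤ Real.sqrt (2*(Estar - ec)) :=
          Real.sqrt_le_sqrt (by linarith)
        have h3 : (Real.sqrt (2*(Eone - ec)))^3 ≤ (Real.sqrt (2*(Estar - ec)))^3 :=
          pow_le_pow_left₀ hbpos.le hκ 3
        have hterm : D/(Real.sqrt (2*(Estar - ec)))^3 ≤ D/(Real.sqrt (2*(Eone - ec)))^3 := by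
          rw [div_le_div_iff₀ ha3 hb3]
          exact mul_le_mul_of_nonneg_left h3 hD.le
        rw [abs_of_nonneg (by linarith : (0:ℝ) ≤ Estar - Eone)]
        linarith [hphiab.2, hterm, hEq1]
      · have hκ : Real.sqrt (2*(Estar - ec)) ≤ Real.sqrt (2*(Eone - ec)) :=
          Real.sqrt_le_sqrt (by linarith)
        have h3 : (Real.sqrt (2*(Estar - ec)))^3 ≤ (Real.sqrt (2*(Eone - ec)))^3 :=
          pow_le_pow_left₀ hapos.le hκ 3
        have hterm : D/(Real.sqrt (2*(Eone - ec)))^3 ≤ D/(Real.sqrt (2*(Estar - ec)))^3 := by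
          rw [div_le_div_iff₀ hb3 ha3]
          exact mul_le_mul_of_nonneg_left h3 hD.le
        rw [abs_of_nonpos (by linarith : Estar - Eone ≤ 0)]
        linarith [hphiab.1, hterm, hEq1]
    have hclose : |Estar - Eone| ≤ C₁*δ := by
      rw [hC₁def, div_mul_eq_mul_div, le_div_iff₀ hg₀]
      linarith [hg2]
    -- value bound
    have hlip : |(g₀*(Estar - E₀)^2/2 + D/Real.sqrt (2*(Estar - ec)))
        - (g₀*(Eone - E₀)^2/2 + D/Real.sqrt (2*(Eone - ec)))| ≤ L*|Estar - Eone| := by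
      have hsplit : (g₀*(Estar - E₀)^2/2 + D/Real.sqrt (2*(Estar - ec)))
          - (g₀*(Eone - E₀)^2/2 + D/Real.sqrt (2*(Eone - ec)))
          = g₀*(Estar - Eone)*(((Estar - E₀)+(Eone - E₀))/2)
            + D*(1/Real.sqrt (2*(Estar - ec)) - 1/Real.sqrt (2*(Eone - ec))) := by ring
      rw [hsplit]
      have h1 : |g₀*(Estar - Eone)*(((Estar - E₀)+(Eone - E₀))/2)|
          ≤ g₀*(E₂ - E₁')*|Estar - Eone| := by
        rw [abs_mul, abs_mul, abs_of_pos hg₀]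
        have hbound : |((Estar - E₀)+(Eone - E₀))/2| ≤ E₂ - E₁' := by
          rw [abs_div, abs_two, div_le_iff₀ (by norm_num : (0:ℝ) < 2)]
          rw [abs_le]
          have h1 := hEstarS.1; have h2 := hEstarS.2
          have h3 := hEoneS.1; have h4 := hEoneS.2
          have h5 := hE₀.1; have h6 := hE₀.2
          constructor <;> linarith
        calc g₀*|Estar - Eone| * |((Estar - E₀)+(Eone - E₀))/2|
            ≤ g₀*|Estar - Eone| * (E₂ - E₁') :=
              mul_le_mul_of_nonneg_left hbound (by positivity)
          _ = g₀*(E₂ - E₁')*|Estar - Eone| := by ring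
      have h2 : |D*(1/Real.sqrt (2*(Estar - ec)) - 1/Real.sqrt (2*(Eone - ec)))|
          ≤ D/s^3*|Estar - Eone| := by
        rw [abs_mul, abs_of_pos hD]
        have hl := lipinv_aux hs (hks Estar hEstarS) (hks Eone hEoneS)
        have hd2 : |(Real.sqrt (2*(Estar - ec)))^2 - (Real.sqrt (2*(Eone - ec)))^2|
            = 2*|Estar - Eone| := by
          rw [ha2, hb2, show 2*(Estar - ec) - 2*(Eone - ec) = 2*(Estar - Eone) by ring,
            abs_mul, abs_two]
        rw [hd2] at hl
        calc D*|1/Real.sqrt (2*(Estar - ec)) - 1/Real.sqrt (2*(Eone - ec))|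
            ≤ D*(2*|Estar - Eone|/(2*s^3)) := mul_le_mul_of_nonneg_left hl hD.le
          _ = D/s^3*|Estar - Eone| := by
              rw [mul_div_mul_left _ _ (two_ne_zero (α := ℝ))]
              ring
      calc |g₀*(Estar - Eone)*(((Estar - E₀)+(Eone - E₀))/2)
            + D*(1/Real.sqrt (2*(Estar - ec)) - 1/Real.sqrt (2*(Eone - ec)))|
          ≤ |g₀*(Estar - Eone)*(((Estar - E₀)+(Eone - E₀))/2)|
            + |D*(1/Real.sqrt (2*(Estar - ec)) - 1/Real.sqrt (2*(Eone - ec)))| := abs_add_le _ _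
        _ ≤ L*|Estar - Eone| := by rw [hLdef]; linarith [h1, h2]
    have hval : |(G Estar δ + D*δ^2/Real.sqrt (2*(Estar - ec)) + r Estar δ)
        - δ^2*(D/Real.sqrt (2*(Eone - ec)) + g₀*(Eone - E₀)^2/2)| ≤ (2*C + L*C₁)*δ^3 := by
      have step : |δ^2*(g₀*(Estar - E₀)^2/2 + D/Real.sqrt (2*(Estar - ec)))
          - δ^2*(g₀*(Eone - E₀)^2/2 + D/Real.sqrt (2*(Eone - ec)))| ≤ L*C₁*δ^3 := by
        rw [← mul_sub, abs_mul, abs_of_pos (pow_pos hδpos 2)]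
        calc δ^2*|(g₀*(Estar - E₀)^2/2 + D/Real.sqrt (2*(Estar - ec)))
              - (g₀*(Eone - E₀)^2/2 + D/Real.sqrt (2*(Eone - ec)))|
            ≤ δ^2*(L*(C₁*δ)) := by
              refine mul_le_mul_of_nonneg_left (hlip.trans ?_) (by positivity)
              exact mul_le_mul_of_nonneg_left hclose hL.le
          _ = L*C₁*δ^3 := by ring
      have hco : (G Estar δ + D*δ^2/Real.sqrt (2*(Estar - ec)) + r Estar δ)
          - δ^2*(D/Real.sqrt (2*(Eone - ec)) + g₀*(Eone - E₀)^2/2)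
          = ((G Estar δ + D*δ^2/Real.sqrt (2*(Estar - ec)) + r Estar δ)
              - δ^2*(g₀*(Estar - E₀)^2/2 + D/Real.sqrt (2*(Estar - ec))))
            + (δ^2*(g₀*(Estar - E₀)^2/2 + D/Real.sqrt (2*(Estar - ec)))
              - δ^2*(g₀*(Eone - E₀)^2/2 + D/Real.sqrt (2*(Eone - ec)))) := by ring
      rw [hco]
      exact le_trans (abs_add_le _ _) (by linarith [hA, step])
    -- second derivative bound
    have hGU : ContDiffOn ℝ 2 (fun E => G E δ) (Set.Ioo E₁' E₂) :=
      hGc.mono Set.Ioo_subset_Icc_self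
    have hrU : ContDiffOn ℝ 2 (fun E => r E δ) (Set.Ioo E₁' E₂) :=
      hrc.mono Set.Ioo_subset_Icc_self
    have hGd1 : ContDiffOn ℝ 1 (deriv (fun E => G E δ)) (Set.Ioo E₁' E₂) :=
      hGU.deriv_of_isOpen isOpen_Ioo (by norm_num)
    have hrd1 : ContDiffOn ℝ 1 (deriv (fun E => r E δ)) (Set.Ioo E₁' E₂) :=
      hrU.deriv_of_isOpen isOpen_Ioo (by norm_num)
    have hEqOn : (deriv (fun E => G E δ + D*δ^2/Real.sqrt (2*(E - ec)) + r E δ))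
        =ᶠ[nhds Estar] (fun y => deriv (fun E => G E δ) y
          + -(D*δ^2)/(Real.sqrt (2*(y - ec)))^3 + deriv (fun E => r E δ) y) := by
      filter_upwards [hU] with y hy
      have hyS : y ∈ Set.Icc E₁' E₂ := Set.Ioo_subset_Icc_self hy
      have hGy : DifferentiableAt ℝ (fun E => G E δ) y :=
        (hGc.contDiffAt (Icc_mem_nhds hy.1 hy.2)).differentiableAt two_ne_zero
      have hry : DifferentiableAt ℝ (fun E => r E δ) y :=
        (hrc.contDiffAt (Icc_mem_nhds hy.1 hy.2)).differentiableAt two_ne_zero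
      have hhy : HasDerivAt (fun E => D*δ^2/Real.sqrt (2*(E - ec)))
          (-(D*δ^2)/(Real.sqrt (2*(y - ec)))^3) y := hasDerivAt_invk (hecE y hyS)
      exact ((hGy.hasDerivAt.add hhy).add hry.hasDerivAt).deriv
    have hit2 : iteratedDerivWithin 2
        (fun E => G E δ + D*δ^2/Real.sqrt (2*(E - ec)) + r E δ) (Set.Icc E₁' E₂) Estar
        = deriv (deriv (fun E => G E δ + D*δ^2/Real.sqrt (2*(E - ec)) + r E δ)) Estar :=
      iter2_aux _ hEstarIoo
    have hit2G : iteratedDerivWithin 2 (fun E' => G E' δ) (Set.Icc E₁' E₂) Estar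
        = deriv (deriv (fun E' => G E' δ)) Estar := iter2_aux _ hEstarIoo
    have hit2r : iteratedDerivWithin 2 (fun E' => r E' δ) (Set.Icc E₁' E₂) Estar
        = deriv (deriv (fun E' => r E' δ)) Estar := iter2_aux _ hEstarIoo
    have hdd : deriv (deriv (fun E => G E δ + D*δ^2/Real.sqrt (2*(E - ec)) + r E δ)) Estar
        = deriv (deriv (fun E => G E δ)) Estar
          + 3*(D*δ^2)/(Real.sqrt (2*(Estar - ec)))^5 + deriv (deriv (fun E => r E δ)) Estar := by
      rw [hEqOn.deriv_eq]
      have h1 : DifferentiableAt ℝ (deriv (fun E => G E δ)) Estar :=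
        (hGd1.contDiffAt hU).differentiableAt one_ne_zero
      have h2 : DifferentiableAt ℝ (deriv (fun E => r E δ)) Estar :=
        (hrd1.contDiffAt hU).differentiableAt one_ne_zero
      have h3 : HasDerivAt (fun y => -(D*δ^2)/(Real.sqrt (2*(y - ec)))^3)
          (3*(D*δ^2)/(Real.sqrt (2*(Estar - ec)))^5) Estar :=
        hasDerivAt_invk3 (hecE Estar hEstarS)
      exact ((h1.hasDerivAt.add h3).add h2.hasDerivAt).deriv
    have hG2 := (hGb Estar hEstarS).2.2
    rw [hit2G] at hG2
    have hr2 := hrb Estar hEstarS 2 le_rfl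
    rw [hit2r] at hr2
    have hlip5 := lipinv5_aux hs (hks Estar hEstarS) (hks Eone hEoneS)
      (hkK Estar hEstarS) (hkK Eone hEoneS)
    have h5 : |3*(D*δ^2)/(Real.sqrt (2*(Estar - ec)))^5
        - δ^2*(3*D/(Real.sqrt (2*(Eone - ec)))^5)| ≤ C₃*δ^3 := by
      have he : 3*(D*δ^2)/(Real.sqrt (2*(Estar - ec)))^5
          - δ^2*(3*D/(Real.sqrt (2*(Eone - ec)))^5)
          = 3*D*δ^2*(1/(Real.sqrt (2*(Estar - ec)))^5 - 1/(Real.sqrt (2*(Eone - ec)))^5) := by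
        ring
      rw [he, abs_mul, abs_of_pos (by positivity : (0:ℝ) < 3*D*δ^2)]
      have hd2' : |(Real.sqrt (2*(Estar - ec)))^2 - (Real.sqrt (2*(Eone - ec)))^2|
          = 2*|Estar - Eone| := by
        rw [ha2, hb2, show 2*(Estar - ec) - 2*(Eone - ec) = 2*(Estar - Eone) by ring,
          abs_mul, abs_two]
      rw [hd2'] at hlip5
      calc 3*D*δ^2*|1/(Real.sqrt (2*(Estar - ec)))^5 - 1/(Real.sqrt (2*(Eone - ec)))^5|
          ≤ 3*D*δ^2*(5*K^4*(2*|Estar - Eone|)/(2*s^11)) :=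
            mul_le_mul_of_nonneg_left hlip5 (by positivity)
        _ ≤ 3*D*δ^2*(5*K^4*(2*(C₁*δ))/(2*s^11)) := by
            refine mul_le_mul_of_nonneg_left ?_ (by positivity)
            gcongr
        _ = C₃*δ^3 := by rw [hC₃def]; field_simp; ring
    have hfinal2 : |iteratedDerivWithin 2
        (fun E => G E δ + D*δ^2/Real.sqrt (2*(E - ec)) + r E δ) (Set.Icc E₁' E₂) Estar
        - δ^2*(g₀ + 3*D/(Real.sqrt (2*(Eone - ec)))^5)| ≤ (2*C + C₃)*δ^3 := by
      rw [hit2, hdd]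
      have hco : (deriv (deriv (fun E => G E δ)) Estar
            + 3*(D*δ^2)/(Real.sqrt (2*(Estar - ec)))^5 + deriv (deriv (fun E => r E δ)) Estar)
          - δ^2*(g₀ + 3*D/(Real.sqrt (2*(Eone - ec)))^5)
          = ((deriv (deriv (fun E => G E δ)) Estar - g₀*δ^2)
            + deriv (deriv (fun E => r E δ)) Estar)
            + (3*(D*δ^2)/(Real.sqrt (2*(Estar - ec)))^5
              - δ^2*(3*D/(Real.sqrt (2*(Eone - ec)))^5)) := by ring
      rw [hco]
      refine le_trans (abs_add_le _ _) ?_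
      have := le_trans (abs_add_le (deriv (deriv (fun E => G E δ)) Estar - g₀*δ^2)
        (deriv (deriv (fun E => r E δ)) Estar)) (by linarith [hG2, hr2] :
          |deriv (deriv (fun E => G E δ)) Estar - g₀*δ^2|
          + |deriv (deriv (fun E => r E δ)) Estar| ≤ 2*C*δ^3)
      linarith [h5]
    -- assemble
    have hδ3 : (0:ℝ) < δ^3 := pow_pos hδpos 3
    have hLC₁ : 0 < L*C₁ := mul_pos hL hC₁
    refine ⟨?_, ?_, ?_⟩
    · calc |Estar - Eone| ≤ C₁*δ := hclose
        _ ≤ C'*δ := by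
          refine mul_le_mul_of_nonneg_right ?_ hδpos.le
          rw [hC'def]; linarith
    · refine hval.trans ?_
      refine mul_le_mul_of_nonneg_right ?_ hδ3.le
      rw [hC'def]; linarith
    · refine hfinal2.trans ?_
      refine mul_le_mul_of_nonneg_right ?_ hδ3.le
      rw [hC'def]; linarith
end

section
/- Let h be an m×m Hermitian complex matrix and E ∈ ℝ such that E·I − h is positive definite. Then: (i) if φ ∈ ℂ^m satisfies hφ = eφ for a real number e, then for each τ ∈ {+1,−1} the vector (φ, τ√(2(E−e))·φ) ∈ ℂ^{2m} satisfies H(E)·(φ, τ√(2(E−e))·φ) = τ√(2(E−e))·(φ, τ√(2(E−e))·φ); (ii) the spectrum of H(E) equals {τ√(2(E−e)) : e an eigenvalue of h, τ ∈ {+1,−1}}. -/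
open scoped ComplexOrder

lemma aux_apply {n : Type*} [Fintype n] [DecidableEq n] (A : Matrix n n ℂ) (v : n → ℂ) :
    (Matrix.toLinAlgEquiv' : Matrix n n ℂ ≃ₐ[ℂ] _) A v = A.mulVec v := rfl

lemma aux_mem_spectrum_iff {n : Type*} [Fintype n] [DecidableEq n]
    (A : Matrix n n ℂ) (μ : ℂ) :
    μ ∈ spectrum ℂ A ↔ ∃ v : n → ℂ, v ≠ 0 ∧ A.mulVec v = μ • v := by
  rw [← AlgEquiv.spectrum_eq (Matrix.toLinAlgEquiv' : Matrix n n ℂ ≃ₐ[ℂ] _) A,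
    ← Module.End.hasEigenvalue_iff_mem_spectrum, Module.End.hasEigenvalue_iff,
    Submodule.ne_bot_iff]
  constructor
  · rintro ⟨v, hv, hv0⟩
    exact ⟨v, hv0, by rw [← aux_apply]; exact Module.End.mem_eigenspace_iff.mp hv⟩
  · rintro ⟨v, hv0, hv⟩
    exact ⟨v, Module.End.mem_eigenspace_iff.mpr (by rw [aux_apply]; exact hv), hv0⟩

lemma aux_real {m : ℕ} {h : Matrix (Fin m) (Fin m) ℂ} {E : ℝ}
    (hpos : ((E : ℂ) • (1 : Matrix (Fin m) (Fin m) ℂ) - h).PosDef)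
    {v : Fin m → ℂ} (hv0 : v ≠ 0) {μ : ℂ} (hv : h.mulVec v = μ • v) :
    μ.im = 0 ∧ μ.re < E := by
  have hc : 0 < dotProduct (star v) v := Matrix.dotProduct_star_self_pos_iff.mpr hv0
  have hlt : 0 < dotProduct (star v)
      (((E : ℂ) • (1 : Matrix (Fin m) (Fin m) ℂ) - h).mulVec v) := hpos.dotProduct_mulVec_pos hv0
  have hmv : ((E : ℂ) • (1 : Matrix (Fin m) (Fin m) ℂ) - h).mulVec v = ((E : ℂ) - μ) • v := by
    rw [Matrix.sub_mulVec, Matrix.smul_mulVec, Matrix.one_mulVec, hv, sub_smul]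
  rw [hmv, dotProduct_smul, smul_eq_mul] at hlt
  set c : ℂ := dotProduct (star v) v with hc_def
  rw [Complex.lt_def] at hc hlt
  have hcim : c.im = 0 := hc.2.symm
  have hcre : 0 < c.re := by simpa using hc.1
  have h1 : -μ.im * c.re = 0 := by
    have := hlt.2.symm
    simpa [Complex.mul_im, hcim] using this.symm
  have h2 : 0 < (E - μ.re) * c.re := by
    have := hlt.1
    simpa [Complex.mul_re, hcim] using this
  constructor
  · rcases mul_eq_zero.mp h1 with h' | h'
    · linarith [neg_eq_zero.mp h']
    · exact absurd h' (ne_of_gt hcre)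
  · nlinarith

/-- Let `h` be an `m×m` Hermitian matrix and `E ∈ ℝ` with `E·I − h` positive definite,
and let `H(E) = [[0, I],[2(E·I − h), 0]]` (in `m×m` blocks).  Then:
(i) if `hφ = eφ` with `e ∈ ℝ`, then for `τ = ±1` the vector `(φ, τ√(2(E−e))φ)` is an
eigenvector of `H(E)` with eigenvalue `τ√(2(E−e))`;
(ii) `spectrum ℂ H(E) = {τ√(2(E−e)) : e eigenvalue of h, τ = ±1}`. -/
theorem stmt_15 (m : ℕ) (h : Matrix (Fin m) (Fin m) ℂ) (hherm : h.IsHermitian)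
    (E : ℝ) (hpos : ((E : ℂ) • (1 : Matrix (Fin m) (Fin m) ℂ) - h).PosDef) :
    (∀ (φ : Fin m → ℂ) (e : ℝ) (τ : ℝ), τ = 1 ∨ τ = -1 →
      h.mulVec φ = (e : ℂ) • φ →
      (Matrix.fromBlocks (0 : Matrix (Fin m) (Fin m) ℂ) (1 : Matrix (Fin m) (Fin m) ℂ)
          ((2 : ℂ) • ((E : ℂ) • (1 : Matrix (Fin m) (Fin m) ℂ) - h))
          (0 : Matrix (Fin m) (Fin m) ℂ)).mulVec
        (Sum.elim φ fun i => ((τ * Real.sqrt (2 * (E - e)) : ℝ) : ℂ) * φ i)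
        = ((τ * Real.sqrt (2 * (E - e)) : ℝ) : ℂ) •
            Sum.elim φ (fun i => ((τ * Real.sqrt (2 * (E - e)) : ℝ) : ℂ) * φ i)) ∧
    spectrum ℂ
        (Matrix.fromBlocks (0 : Matrix (Fin m) (Fin m) ℂ) (1 : Matrix (Fin m) (Fin m) ℂ)
          ((2 : ℂ) • ((E : ℂ) • (1 : Matrix (Fin m) (Fin m) ℂ) - h))
          (0 : Matrix (Fin m) (Fin m) ℂ))
      = {z : ℂ | ∃ e : ℝ, (e : ℂ) ∈ spectrum ℂ h ∧
          (z = ((Real.sqrt (2 * (E - e)) : ℝ) : ℂ) ∨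
            z = -((Real.sqrt (2 * (E - e)) : ℝ) : ℂ))} := by
  have part1 : ∀ (φ : Fin m → ℂ) (e : ℝ) (τ : ℝ), τ = 1 ∨ τ = -1 →
      h.mulVec φ = (e : ℂ) • φ →
      (Matrix.fromBlocks (0 : Matrix (Fin m) (Fin m) ℂ) (1 : Matrix (Fin m) (Fin m) ℂ)
          ((2 : ℂ) • ((E : ℂ) • (1 : Matrix (Fin m) (Fin m) ℂ) - h))
          (0 : Matrix (Fin m) (Fin m) ℂ)).mulVec
        (Sum.elim φ fun i => ((τ * Real.sqrt (2 * (E - e)) : ℝ) : ℂ) * φ i)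
        = ((τ * Real.sqrt (2 * (E - e)) : ℝ) : ℂ) •
            Sum.elim φ (fun i => ((τ * Real.sqrt (2 * (E - e)) : ℝ) : ℂ) * φ i) := by
    intro φ e τ hτ hφ
    rcases eq_or_ne φ 0 with rfl | hφ0
    · have h0 : (Sum.elim (0 : Fin m → ℂ)
          fun i => ((τ * Real.sqrt (2 * (E - e)) : ℝ) : ℂ) * (0 : Fin m → ℂ) i)
          = (0 : Fin m ⊕ Fin m → ℂ) := by
        funext s; cases s <;> simp
      rw [h0, Matrix.mulVec_zero, smul_zero]
    · have heE : e < E := by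
        have := aux_real hpos hφ0 hφ
        simpa using this.2
      have htsq : (τ * Real.sqrt (2 * (E - e))) ^ 2 = 2 * (E - e) := by
        rcases hτ with rfl | rfl <;>
        · rw [mul_pow, Real.sq_sqrt (by linarith)]; ring
      have ht2 : ((τ * Real.sqrt (2 * (E - e)) : ℝ) : ℂ) ^ 2 = 2 * ((E : ℂ) - (e : ℂ)) := by
        rw [← Complex.ofReal_pow, htsq]
        push_cast
        ring
      have hbot : ((2 : ℂ) • ((E : ℂ) • (1 : Matrix (Fin m) (Fin m) ℂ) - h)).mulVec φ
          = (((τ * Real.sqrt (2 * (E - e)) : ℝ) : ℂ) ^ 2) • φ := by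
        rw [Matrix.smul_mulVec, Matrix.sub_mulVec, Matrix.smul_mulVec,
          Matrix.one_mulVec, hφ, ← sub_smul, smul_smul, ht2]
      rw [Matrix.fromBlocks_mulVec, Sum.elim_comp_inl, Sum.elim_comp_inr]
      simp only [Matrix.zero_mulVec, Matrix.one_mulVec, zero_add, add_zero]
      rw [hbot]
      funext s
      cases s with
      | inl i => simp
      | inr i => simp [pow_two, mul_assoc]
  refine ⟨part1, ?_⟩
  ext z
  simp only [Set.mem_setOf_eq]
  constructor
  · intro hz
    obtain ⟨v, hv0, hv⟩ := (aux_mem_spectrum_iff _ z).mp hz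
    set x : Fin m → ℂ := v ∘ Sum.inl with hx_def
    set y : Fin m → ℂ := v ∘ Sum.inr with hy_def
    rw [Matrix.fromBlocks_mulVec] at hv
    have htop : y = z • x := by
      funext i
      have := congrFun hv (Sum.inl i)
      simpa [Matrix.zero_mulVec, Matrix.one_mulVec, hx_def, hy_def] using this
    have hbot : ((2 : ℂ) • ((E : ℂ) • (1 : Matrix (Fin m) (Fin m) ℂ) - h)).mulVec x = z • y := by
      funext i
      have := congrFun hv (Sum.inr i)
      simpa [Matrix.zero_mulVec, hx_def, hy_def] using this
    have hx0 : x ≠ 0 := by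
      intro hx
      apply hv0
      funext s
      cases s with
      | inl i => exact congrFun hx i
      | inr i =>
        have : y = 0 := by rw [htop, hx, smul_zero]
        exact congrFun this i
    have h5 : (2 : ℂ) • h.mulVec x = (2 * (E : ℂ)) • x - z ^ 2 • x := by
      have hA : ((2 : ℂ) • ((E : ℂ) • (1 : Matrix (Fin m) (Fin m) ℂ) - h)).mulVec x
          = (2 * (E : ℂ)) • x - (2 : ℂ) • h.mulVec x := by
        rw [Matrix.smul_mulVec, Matrix.sub_mulVec, Matrix.smul_mulVec,
          Matrix.one_mulVec, smul_sub, smul_smul]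
      have h4 : (2 * (E : ℂ)) • x - (2 : ℂ) • h.mulVec x = z ^ 2 • x := by
        rw [← hA, hbot, htop, smul_smul, sq]
      rw [← h4]; abel
    have hhx : h.mulVec x = ((E : ℂ) - z ^ 2 / 2) • x := by
      apply smul_right_injective (Fin m → ℂ) (two_ne_zero' ℂ)
      show (2 : ℂ) • h.mulVec x = (2 : ℂ) • (((E : ℂ) - z ^ 2 / 2) • x)
      have h7 : (2 : ℂ) • (((E : ℂ) - z ^ 2 / 2) • x) = (2 * (E : ℂ)) • x - z ^ 2 • x := by
        rw [smul_smul, ← sub_smul]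
        congr 1
        ring
      rw [h5, h7]
    have hμ := aux_real hpos hx0 hhx
    set e : ℝ := ((E : ℂ) - z ^ 2 / 2).re with he_def
    have hμeq : (E : ℂ) - z ^ 2 / 2 = (e : ℂ) := by
      apply Complex.ext <;> simp [he_def, hμ.1]
    have heE : e < E := by simpa [he_def] using hμ.2
    have hz2 : z ^ 2 = ((Real.sqrt (2 * (E - e)) : ℝ) : ℂ) ^ 2 := by
      have h4 : z ^ 2 = 2 * ((E : ℂ) - (e : ℂ)) := by linear_combination (-2 : ℂ) * hμeq
      have h6 : ((Real.sqrt (2 * (E - e)) : ℝ) : ℂ) ^ 2 = 2 * ((E : ℂ) - (e : ℂ)) := by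
        rw [← Complex.ofReal_pow, Real.sq_sqrt (by linarith)]
        push_cast
        ring
      rw [h4, h6]
    refine ⟨e, (aux_mem_spectrum_iff h ((e : ℝ) : ℂ)).mpr ⟨x, hx0, by rw [← hμeq]; exact hhx⟩, ?_⟩
    have hfac : (z - ((Real.sqrt (2 * (E - e)) : ℝ) : ℂ))
        * (z + ((Real.sqrt (2 * (E - e)) : ℝ) : ℂ)) = 0 := by
      linear_combination hz2
    rcases mul_eq_zero.mp hfac with h' | h'
    · exact Or.inl (sub_eq_zero.mp h')
    · exact Or.inr (eq_neg_of_add_eq_zero_left h')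
  · rintro ⟨e, he, hz⟩
    obtain ⟨φ, hφ0, hφ⟩ := (aux_mem_spectrum_iff h ((e : ℝ) : ℂ)).mp he
    rw [aux_mem_spectrum_iff]
    rcases hz with rfl | rfl
    · have hkey := part1 φ e 1 (Or.inl rfl) hφ
      refine ⟨Sum.elim φ fun i => (((1 : ℝ) * Real.sqrt (2 * (E - e)) : ℝ) : ℂ) * φ i, ?_, ?_⟩
      · intro h0
        apply hφ0
        funext i
        simpa using congrFun h0 (Sum.inl i)
      · have hc : (((1 : ℝ) * Real.sqrt (2 * (E - e)) : ℝ) : ℂ)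
            = ((Real.sqrt (2 * (E - e)) : ℝ) : ℂ) := by push_cast; ring
        rw [← hc]
        exact hkey
    · have hkey := part1 φ e (-1) (Or.inr rfl) hφ
      refine ⟨Sum.elim φ fun i => (((-1 : ℝ) * Real.sqrt (2 * (E - e)) : ℝ) : ℂ) * φ i, ?_, ?_⟩
      · intro h0
        apply hφ0
        funext i
        simpa using congrFun h0 (Sum.inl i)
      · have hc : (((-1 : ℝ) * Real.sqrt (2 * (E - e)) : ℝ) : ℂ)
            = -((Real.sqrt (2 * (E - e)) : ℝ) : ℂ) := by push_cast; ring
        rw [← hc]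
        exact hkey
end

section
/- Let h be an m×m Hermitian complex matrix with orthonormal eigenbasis φ₁,…,φ_m and real eigenvalues e₁,…,e_m (hφ_j = e_jφ_j), and let E ∈ ℝ with E > e_j for all j; set k_j := √(2(E − e_j)). For j = 1,…,m and τ ∈ {+1,−1} define χ_j^τ := (φ_j, τ k_j φ_j) ∈ ℂ^{2m}, θ_j^τ := (1/2)(φ_j, (τ/k_j) φ_j) ∈ ℂ^{2m}, and the 2m×2m matrix P_j^τ := |χ_j^τ⟩⟨θ_j^τ| (i.e. P_j^τ v = ⟨θ_j^τ, v⟩ χ_j^τ, with the inner product conjugate-linear in its first argument). Then: (i) P_j^τ P_l^σ = δ_{jl} δ_{τσ} P_j^τ; (ii) Σ_{j,τ} P_j^τ = I_{2m}; and (iii) H(E) = Σ_{j,τ} τ k_j P_j^τ. -/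
/-- Let `h` be an `m×m` Hermitian matrix with orthonormal eigenbasis `φ₁,…,φ_m` and real
eigenvalues `e₁,…,e_m`, and `E > e_j` for all `j`; `k_j := √(2(E−e_j))`.  With
`χ_j^τ := (φ_j, τk_jφ_j)`, `θ_j^τ := (1/2)(φ_j, (τ/k_j)φ_j)`, and
`P_j^τ := |χ_j^τ⟩⟨θ_j^τ|`, and `H(E) = [[0, I],[2(E·I − h), 0]]`:
(i) `P_j^τ P_l^σ = δ_{jl} δ_{τσ} P_j^τ`; (ii) `Σ_{j,τ} P_j^τ = I`;
(iii) `H(E) = Σ_{j,τ} τ k_j P_j^τ`. -/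
theorem stmt_16 (m : ℕ) (h : Matrix (Fin m) (Fin m) ℂ) (hherm : h.IsHermitian)
    (φ : Fin m → Fin m → ℂ) (e : Fin m → ℝ)
    (horth : ∀ i j : Fin m,
      dotProduct (star (φ i)) (φ j) = if i = j then 1 else 0)
    (heig : ∀ j : Fin m, h.mulVec (φ j) = ((e j : ℝ) : ℂ) • φ j)
    (E : ℝ) (hE : ∀ j : Fin m, e j < E)
    (k : Fin m → ℝ) (hk : ∀ j : Fin m, k j = Real.sqrt (2 * (E - e j)))
    (χ θ : Fin m → ℝ → (Fin m ⊕ Fin m → ℂ))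
    (hχ : ∀ (j : Fin m) (τ : ℝ),
      χ j τ = Sum.elim (φ j) fun i => ((τ * k j : ℝ) : ℂ) * φ j i)
    (hθ : ∀ (j : Fin m) (τ : ℝ),
      θ j τ = Sum.elim (fun i => (1 / 2 : ℂ) * φ j i)
        fun i => (1 / 2 : ℂ) * ((τ / k j : ℝ) : ℂ) * φ j i)
    (P : Fin m → ℝ → Matrix (Fin m ⊕ Fin m) (Fin m ⊕ Fin m) ℂ)
    (hP : ∀ (j : Fin m) (τ : ℝ), P j τ = Matrix.vecMulVec (χ j τ) (star (θ j τ)))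
    (H : Matrix (Fin m ⊕ Fin m) (Fin m ⊕ Fin m) ℂ)
    (hH : H = Matrix.fromBlocks (0 : Matrix (Fin m) (Fin m) ℂ)
      (1 : Matrix (Fin m) (Fin m) ℂ)
      ((2 : ℂ) • ((E : ℂ) • (1 : Matrix (Fin m) (Fin m) ℂ) - h))
      (0 : Matrix (Fin m) (Fin m) ℂ)) :
    (∀ (j l : Fin m) (τ σ : ℝ), (τ = 1 ∨ τ = -1) → (σ = 1 ∨ σ = -1) →
      P j τ * P l σ = if j = l ∧ τ = σ then P j τ else 0) ∧
    (∑ j : Fin m, (P j 1 + P j (-1))) = 1 ∧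
    H = ∑ j : Fin m, (((k j : ℝ) : ℂ) • P j 1 + (-(k j : ℝ) : ℂ) • P j (-1)) := by
  have hkpos : ∀ j, (0:ℝ) < k j := fun j => by
    rw [hk]; exact Real.sqrt_pos.mpr (by nlinarith [hE j])
  have hkne : ∀ j, ((k j : ℝ) : ℂ) ≠ 0 := fun j => by
    exact_mod_cast (hkpos j).ne'
  have hk2 : ∀ j, ((k j:ℝ):ℂ) * ((k j:ℝ):ℂ) = 2 * ((E:ℝ):ℂ) - 2 * ((e j:ℝ):ℂ) := by
    intro j
    have h1 : (k j) * (k j) = 2*E - 2*(e j) := by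
      rw [hk, Real.mul_self_sqrt (by nlinarith [hE j])]; ring
    exact_mod_cast congrArg (fun x : ℝ => (x : ℂ)) h1
  have orth' : ∀ i j, (∑ a, (starRingEnd ℂ) (φ i a) * φ j a) = if i = j then 1 else 0 := by
    intro i j
    have := horth i j
    simpa [dotProduct, Pi.star_apply, Complex.star_def] using this
  have comp : ∀ a b : Fin m,
      (∑ j, (starRingEnd ℂ) (φ j a) * φ j b) = if a = b then 1 else 0 := by
    have hU1 : Matrix.of φ * Matrix.conjTranspose (Matrix.of φ) = 1 := by
      ext i j
      have h1 : (∑ a, φ i a * (starRingEnd ℂ) (φ j a))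
          = (starRingEnd ℂ) (∑ a, (starRingEnd ℂ) (φ i a) * φ j a) := by
        rw [map_sum]
        exact Finset.sum_congr rfl fun a _ => by rw [map_mul, Complex.conj_conj]
      simp only [Matrix.mul_apply, Matrix.conjTranspose_apply, Matrix.of_apply,
        Matrix.one_apply, Complex.star_def]
      rw [h1, orth' i j]
      by_cases hij : i = j <;> simp [hij]
    have hU2 : Matrix.conjTranspose (Matrix.of φ) * Matrix.of φ = 1 :=
      mul_eq_one_comm.mp hU1
    intro a b
    have := congrFun (congrFun hU2 a) b
    simpa [Matrix.mul_apply, Matrix.conjTranspose_apply, Matrix.of_apply,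
      Matrix.one_apply, Complex.star_def] using this
  have comp' : ∀ a b : Fin m,
      (∑ j, φ j a * (starRingEnd ℂ) (φ j b)) = if a = b then 1 else 0 := by
    intro a b
    have := congrArg (starRingEnd ℂ) (comp a b)
    simpa [map_sum, mul_comm, apply_ite] using this
  have heig' : ∀ j a, (∑ c, h a c * φ j c) = ((e j:ℝ):ℂ) * φ j a := by
    intro j a
    have := congrFun (heig j) a
    simpa [Matrix.mulVec, dotProduct] using this
  have spec : ∀ a b : Fin m,
      (∑ j, ((e j:ℝ):ℂ) * (φ j a * (starRingEnd ℂ) (φ j b))) = h a b := by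
    intro a b
    have step1 : (∑ j, ((e j:ℝ):ℂ) * (φ j a * (starRingEnd ℂ) (φ j b)))
        = ∑ j, ∑ c, h a c * (φ j c * (starRingEnd ℂ) (φ j b)) := by
      refine Finset.sum_congr rfl fun j _ => ?_
      rw [show (∑ c, h a c * (φ j c * (starRingEnd ℂ) (φ j b)))
          = (∑ c, h a c * φ j c) * (starRingEnd ℂ) (φ j b) by
        rw [Finset.sum_mul]; exact Finset.sum_congr rfl fun c _ => by ring]
      rw [heig']; ring
    rw [step1, Finset.sum_comm]
    calc (∑ c, ∑ j, h a c * (φ j c * (starRingEnd ℂ) (φ j b)))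
        = ∑ c, h a c * (if c = b then 1 else 0) := by
          refine Finset.sum_congr rfl fun c _ => ?_
          rw [← comp' c b, Finset.mul_sum]
      _ = h a b := by simp
  have hPent : ∀ j τ p q, P j τ p q = χ j τ p * (starRingEnd ℂ) (θ j τ q) := by
    intro j τ p q
    rw [hP]
    simp [Matrix.vecMulVec_apply, Pi.star_apply, Complex.star_def]
  have hvmv : ∀ (a b c d : Fin m ⊕ Fin m → ℂ),
      Matrix.vecMulVec a b * Matrix.vecMulVec c d
        = dotProduct b c • Matrix.vecMulVec a d := by
    intro a b c d
    ext p q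
    simp only [Matrix.mul_apply, Matrix.vecMulVec_apply, Matrix.smul_apply, smul_eq_mul,
      dotProduct]
    rw [Finset.sum_mul]
    exact Finset.sum_congr rfl fun r _ => by ring
  have hdot : ∀ (j l : Fin m) (τ σ : ℝ), (τ = 1 ∨ τ = -1) → (σ = 1 ∨ σ = -1) →
      dotProduct (star (θ j τ)) (χ l σ) = if j = l ∧ τ = σ then 1 else 0 := by
    intro j l τ σ hτ hσ
    have h1 : dotProduct (star (θ j τ)) (χ l σ)
        = (1/2 : ℂ) * (1 + ((τ:ℂ) * (σ:ℂ) * ((k l:ℝ):ℂ)) / ((k j:ℝ):ℂ))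
            * (if j = l then 1 else 0) := by
      rw [hθ, hχ]
      simp only [dotProduct, Fintype.sum_sum_type, Pi.star_apply, Sum.elim_inl,
        Sum.elim_inr, Complex.star_def, map_mul, map_div₀, map_one, map_ofNat,
        Complex.conj_ofReal]
      rw [← Finset.sum_add_distrib, ← orth' j l, Finset.mul_sum]
      refine Finset.sum_congr rfl fun x _ => ?_
      push_cast
      ring
    rcases hτ with rfl | rfl <;> rcases hσ with rfl | rfl <;> rw [h1] <;>
      rcases eq_or_ne j l with rfl | hjl
    · rw [if_pos rfl, if_pos ⟨rfl, rfl⟩, mul_one]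
      push_cast
      field_simp
      try norm_num [div_self (hkne j), neg_div, mul_inv_cancel₀ (hkne j)]
    · rw [if_neg hjl, if_neg (by tauto), mul_zero]
    · rw [if_pos rfl, if_neg (by norm_num), mul_one]
      push_cast
      field_simp
      try norm_num [div_self (hkne j), neg_div, mul_inv_cancel₀ (hkne j)]
    · rw [if_neg hjl, if_neg (by tauto), mul_zero]
    · rw [if_pos rfl, if_neg (by norm_num), mul_one]
      push_cast
      field_simp
      try norm_num [div_self (hkne j), neg_div, mul_inv_cancel₀ (hkne j)]
    · rw [if_neg hjl, if_neg (by tauto), mul_zero]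
    · rw [if_pos rfl, if_pos ⟨rfl, rfl⟩, mul_one]
      push_cast
      field_simp
      try norm_num [div_self (hkne j), neg_div, mul_inv_cancel₀ (hkne j)]
      try norm_num [div_self (hkne j), neg_div, mul_inv_cancel₀ (hkne j)]
    · rw [if_neg hjl, if_neg (by tauto), mul_zero]
  refine ⟨?_, ?_, ?_⟩
  · intro j l τ σ hτ hσ
    rw [hP j τ, hP l σ, hvmv, hdot j l τ σ hτ hσ]
    by_cases hc : j = l ∧ τ = σ
    · obtain ⟨h1, h2⟩ := hc
      subst h1; subst h2
      rw [if_pos ⟨rfl, rfl⟩, if_pos ⟨rfl, rfl⟩, one_smul]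
    · rw [if_neg hc, if_neg hc, zero_smul]
  · ext p q
    rcases p with a | a <;> rcases q with b | b
    · rw [show (1 : Matrix (Fin m ⊕ Fin m) (Fin m ⊕ Fin m) ℂ) (Sum.inl a) (Sum.inl b)
          = if a = b then 1 else 0 by simp [Matrix.one_apply]]
      rw [← comp' a b]
      simp only [Matrix.sum_apply, Matrix.add_apply, hPent, hχ, hθ, Sum.elim_inl,
        Sum.elim_inr, map_mul, map_div₀, map_one, map_ofNat, Complex.conj_ofReal]
      refine Finset.sum_congr rfl fun j _ => ?_
      push_cast
      ring
    · rw [show (1 : Matrix (Fin m ⊕ Fin m) (Fin m ⊕ Fin m) ℂ) (Sum.inl a) (Sum.inr b)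
          = 0 by simp [Matrix.one_apply]]
      simp only [Matrix.sum_apply, Matrix.add_apply, hPent, hχ, hθ, Sum.elim_inl,
        Sum.elim_inr, map_mul, map_div₀, map_one, map_ofNat, Complex.conj_ofReal]
      refine Finset.sum_eq_zero fun j _ => ?_
      push_cast
      ring
    · rw [show (1 : Matrix (Fin m ⊕ Fin m) (Fin m ⊕ Fin m) ℂ) (Sum.inr a) (Sum.inl b)
          = 0 by simp [Matrix.one_apply]]
      simp only [Matrix.sum_apply, Matrix.add_apply, hPent, hχ, hθ, Sum.elim_inl,
        Sum.elim_inr, map_mul, map_div₀, map_one, map_ofNat, Complex.conj_ofReal]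
      refine Finset.sum_eq_zero fun j _ => ?_
      push_cast
      ring
    · rw [show (1 : Matrix (Fin m ⊕ Fin m) (Fin m ⊕ Fin m) ℂ) (Sum.inr a) (Sum.inr b)
          = if a = b then 1 else 0 by simp [Matrix.one_apply]]
      rw [← comp' a b]
      simp only [Matrix.sum_apply, Matrix.add_apply, hPent, hχ, hθ, Sum.elim_inl,
        Sum.elim_inr, map_mul, map_div₀, map_one, map_ofNat, Complex.conj_ofReal]
      refine Finset.sum_congr rfl fun j _ => ?_
      have hkk : ((k j:ℝ):ℂ) * ((k j:ℝ):ℂ)⁻¹ = 1 := mul_inv_cancel₀ (hkne j)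
      push_cast
      linear_combination (φ j a * (starRingEnd ℂ) (φ j b)) * hkk
  · ext p q
    rw [hH]
    rcases p with a | a <;> rcases q with b | b
    · rw [Matrix.fromBlocks_apply₁₁, Matrix.zero_apply]
      simp only [Matrix.sum_apply, Matrix.add_apply, Matrix.smul_apply, smul_eq_mul,
        hPent, hχ, hθ, Sum.elim_inl, Sum.elim_inr, map_mul, map_div₀, map_one,
        map_ofNat, Complex.conj_ofReal]
      refine (Finset.sum_eq_zero fun j _ => ?_).symm
      push_cast
      ring
    · rw [Matrix.fromBlocks_apply₁₂, show (1 : Matrix (Fin m) (Fin m) ℂ) a b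
          = if a = b then 1 else 0 by simp [Matrix.one_apply]]
      rw [← comp' a b]
      simp only [Matrix.sum_apply, Matrix.add_apply, Matrix.smul_apply, smul_eq_mul,
        hPent, hχ, hθ, Sum.elim_inl, Sum.elim_inr, map_mul, map_div₀, map_one,
        map_ofNat, Complex.conj_ofReal]
      refine Finset.sum_congr rfl fun j _ => ?_
      have hkk : ((k j:ℝ):ℂ) * ((k j:ℝ):ℂ)⁻¹ = 1 := mul_inv_cancel₀ (hkne j)
      push_cast
      linear_combination (-(φ j a * (starRingEnd ℂ) (φ j b))) * hkk
    · rw [Matrix.fromBlocks_apply₂₁]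
      simp only [Matrix.smul_apply, Matrix.sub_apply, Matrix.one_apply, smul_eq_mul]
      rw [show (2:ℂ) * ((E:ℂ) * (if a = b then 1 else 0) - h a b)
          = 2 * ((E:ℂ) * (if a = b then 1 else 0)) - 2 * h a b by ring]
      rw [← comp' a b, ← spec a b, Finset.mul_sum, Finset.mul_sum, Finset.mul_sum,
        ← Finset.sum_sub_distrib]
      simp only [Matrix.sum_apply, Matrix.add_apply, Matrix.smul_apply, smul_eq_mul,
        hPent, hχ, hθ, Sum.elim_inl, Sum.elim_inr, map_mul, map_div₀, map_one,
        map_ofNat, Complex.conj_ofReal]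
      refine Finset.sum_congr rfl fun j _ => ?_
      push_cast
      linear_combination (-(φ j a * (starRingEnd ℂ) (φ j b))) * hk2 j
    · rw [Matrix.fromBlocks_apply₂₂, Matrix.zero_apply]
      simp only [Matrix.sum_apply, Matrix.add_apply, Matrix.smul_apply, smul_eq_mul,
        hPent, hχ, hθ, Sum.elim_inl, Sum.elim_inr, map_mul, map_div₀, map_one,
        map_ofNat, Complex.conj_ofReal]
      refine (Finset.sum_eq_zero fun j _ => ?_).symm
      push_cast
      ring
end
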